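/- Let n ≥ 1, Q, Q̃ ∈ [0,1], and let E_{a,b,c} be Eve's (unnormalized) states of the depolarizing-channel dilation. Then the overlap of the two states corresponding to the two key values satisfies ⟨E_{0,0⃗,0⃗}, E_{1,1⃗,1⃗}⟩ = (1−Q)(1−Q̃)/2. -/

import Mathlib

open scoped BigOperators

/-- The index type for `ℂ^{2^n} ⊗ ℂ^{2^n} ⊗ ℂ^{2^n} ⊗ ℂ^{2^n} ⊗ ℂ² ⊗ ℂ²`. -/
abbrev EveIdx (n : ℕ) :=
  (Fin n → Bool) × (Fin n → Bool) × (Fin n → Bool) × (Fin n → Bool) × Bool × Bool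

/-- The constant bit string `a⃗ = (a,…,a) ∈ {0,1}^n`. -/
def constStr (n : ℕ) (a : Bool) : Fin n → Bool := fun _ => a

instance eveIdxDecEq (n : ℕ) : DecidableEq (EveIdx n) := instDecidableEqProd

/-- Eve's (unnormalized) state `E_{a,b,c}` of the depolarizing-channel dilation:
`E_{a,b,c} = 2^{−(2n+1)/2} [ δ_{b,a⃗} δ_{c,b} √((1−Q)(1−Q̃)) (Σ_i |i i⟩)⊗(Σ_k |k k⟩)⊗|0 0⟩
 + δ_{c,b} √(Q(1−Q̃)) |a⃗ b⟩⊗(Σ_k |k k⟩)⊗|1 0⟩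
 + δ_{b,a⃗} √((1−Q)Q̃) (Σ_i |i i⟩)⊗|b c⟩⊗|0 1⟩
 + √(Q Q̃) |a⃗ b⟩⊗|b c⟩⊗|1 1⟩ ]`. -/
noncomputable def eveVec (n : ℕ) (Q Qt : ℝ) (a : Bool) (b c : Fin n → Bool) :
    EuclideanSpace ℂ (EveIdx n) :=
  ((Real.sqrt (2 ^ (2 * n + 1)) : ℝ) : ℂ)⁻¹ •
    ((if b = constStr n a ∧ c = b then ((Real.sqrt ((1 - Q) * (1 - Qt)) : ℝ) : ℂ) else 0) •
        (∑ i : Fin n → Bool, ∑ k : Fin n → Bool,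
          EuclideanSpace.single (i, i, k, k, false, false) (1 : ℂ)) +
      (if c = b then ((Real.sqrt (Q * (1 - Qt)) : ℝ) : ℂ) else 0) •
        (∑ k : Fin n → Bool,
          EuclideanSpace.single (constStr n a, b, k, k, true, false) (1 : ℂ)) +
      (if b = constStr n a then ((Real.sqrt ((1 - Q) * Qt) : ℝ) : ℂ) else 0) •
        (∑ i : Fin n → Bool,
          EuclideanSpace.single (i, i, b, c, false, true) (1 : ℂ)) +
      ((Real.sqrt (Q * Qt) : ℝ) : ℂ) •
        EuclideanSpace.single (constStr n a, b, b, c, true, true) (1 : ℂ))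

/-- Overlap of the two Eve states corresponding to the two key values:
`⟨E_{0,0⃗,0⃗}, E_{1,1⃗,1⃗}⟩ = (1−Q)(1−Q̃)/2`. -/
theorem eveVec_overlap (n : ℕ) (hn : 1 ≤ n) (Q Qt : ℝ)
    (hQ0 : 0 ≤ Q) (hQ1 : Q ≤ 1) (hQt0 : 0 ≤ Qt) (hQt1 : Qt ≤ 1) :
    (inner ℂ (eveVec n Q Qt false (constStr n false) (constStr n false))
        (eveVec n Q Qt true (constStr n true) (constStr n true)) : ℂ) =
      (((1 - Q) * (1 - Qt) / 2 : ℝ) : ℂ) := by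
  have hne : constStr n true ≠ constStr n false := by
    intro h; have := congrFun h ⟨0, hn⟩; simp [constStr] at this
  simp only [eveVec, if_pos (⟨rfl, rfl⟩ : _ ∧ _), if_pos rfl]
  simp only [inner_smul_left, inner_smul_right, inner_add_left, inner_add_right,
    sum_inner, inner_sum, EuclideanSpace.inner_single_left, EuclideanSpace.single_apply,
    Prod.mk.injEq, map_one, one_mul, mul_ite, mul_zero, mul_one]
  have hne2 : constStr n false ≠ constStr n true := fun h => hne h.symm
  simp [hne, hne2, Finset.sum_ite_eq, Finset.sum_ite_eq, Complex.conj_ofReal]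
  push_cast [Finset.card_filter]
  simp [ite_and, Finset.sum_ite_eq, Finset.mul_sum, mul_comm]
  have hs0 : ((Real.sqrt (2 ^ (n * 2 + 1)) : ℝ) : ℂ) ≠ 0 := by
    norm_cast; positivity
  field_simp
  ring_nf
  have e1 : ((Real.sqrt (1 - Q + Q * Qt - Qt) : ℝ) : ℂ) ^ 2 = ((1 - Q + Q * Qt - Qt : ℝ) : ℂ) := by
    norm_cast; exact Real.sq_sqrt (by nlinarith)
  have e2 : ((Real.sqrt (2 ^ (n * 2) * 2) : ℝ) : ℂ) ^ 2 = ((2 ^ (n * 2) * 2 : ℝ) : ℂ) := by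
    norm_cast; exact Real.sq_sqrt (by positivity)
  rw [e1, e2]
  push_cast
  ring
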